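/- Assume m + p = 2 (so m ∈ (1,2) and σ > 2). Then for every Y ∈ [−β/(2α), 0], the quantity h(Y) = (σ + 2N − 2)Y² + ((σ − 2 + N)(β/α) − 2)Y − β/α is strictly negative. Consequently, for every X > 0 and Y ∈ [−β/(2α), 0], the inner product G(X,Y) = X·h(Y) of the vector field of (PSsyst1) restricted to the parabolic cylinder {Z = −Y² − (β/α)Y} with the outward normal (0, −2Y − β/α, −1) is strictly negative, so this cylinder cannot be crossed from right to left (in Y) on this range. -/
import Mathlib

open Real Filter Set Topology

noncomputable def alphaC (m p σ : ℝ) : ℝ := (σ + 2) / (σ * (m - 1) + 2 * (p - 1))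

noncomputable def betaC (m p σ : ℝ) : ℝ := (m - p) / (σ * (m - 1) + 2 * (p - 1))

theorem parabolic_cylinder_flow_negative (m p σ : ℝ) (N : ℕ) (hm : 1 < m) (hp0 : 0 < p) (hp1 : p < 1)
    (hσ : 2 * (1 - p) / (m - 1) < σ) (hN : 1 ≤ N)
    (hmp : m + p = 2) :
    (∀ Y : ℝ, -(betaC m p σ) / (2 * alphaC m p σ) ≤ Y → Y ≤ 0 →
      (σ + 2 * (N : ℝ) - 2) * Y ^ 2
        + ((σ - 2 + (N : ℝ)) * (betaC m p σ / alphaC m p σ) - 2) * Y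
        - betaC m p σ / alphaC m p σ < 0) ∧
    (∀ X Y : ℝ, 0 < X → -(betaC m p σ) / (2 * alphaC m p σ) ≤ Y → Y ≤ 0 →
      X * ((σ + 2 * (N : ℝ) - 2) * Y ^ 2
        + ((σ - 2 + (N : ℝ)) * (betaC m p σ / alphaC m p σ) - 2) * Y
        - betaC m p σ / alphaC m p σ) < 0) := by
  have hm1 : (0:ℝ) < m - 1 := by linarith
  have hp' : p = 2 - m := by linarith
  have hσ2 : (2:ℝ) < σ := by
    have h : 2 * (1 - p) / (m - 1) = 2 := by
      rw [hp']; field_simp; ring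
    linarith [h ▸ hσ]
  have hL : σ * (m - 1) + 2 * (p - 1) = (m - 1) * (σ - 2) := by rw [hp']; ring
  have hLpos : (0:ℝ) < (m - 1) * (σ - 2) := mul_pos hm1 (by linarith)
  have hLne : σ * (m - 1) + 2 * (p - 1) ≠ 0 := by rw [hL]; exact ne_of_gt hLpos
  have hσ2ne : σ + 2 ≠ 0 := by linarith
  have hr : betaC m p σ / alphaC m p σ = 2 * (m - 1) / (σ + 2) := by
    unfold alphaC betaC
    rw [hL, div_div_div_cancel_right₀ (ne_of_gt hLpos), hp']
    ring_nf
  have hα : alphaC m p σ = (σ + 2) / ((m - 1) * (σ - 2)) := by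
    unfold alphaC; rw [hL]
  have hαpos : 0 < alphaC m p σ := by rw [hα]; positivity
  have hhalf : -(betaC m p σ) / (2 * alphaC m p σ) = -(2 * (m - 1) / (σ + 2)) / 2 := by
    rw [neg_div, neg_div, ← hr, div_div]
    ring_nf
  set r : ℝ := 2 * (m - 1) / (σ + 2) with hrdef
  have hr0 : 0 < r := by positivity
  have hrσ : r * (σ + 2) = 2 * (m - 1) := by
    rw [hrdef, div_mul_cancel₀ _ hσ2ne]
  have hm2 : m < 2 := by linarith
  have key : ∀ Y : ℝ, -(betaC m p σ) / (2 * alphaC m p σ) ≤ Y → Y ≤ 0 →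
      (σ + 2 * (N : ℝ) - 2) * Y ^ 2
        + ((σ - 2 + (N : ℝ)) * (betaC m p σ / alphaC m p σ) - 2) * Y
        - betaC m p σ / alphaC m p σ < 0 := by
    intro Y h1 h2
    rw [hhalf] at h1
    rw [hr]
    have hN1 : (1:ℝ) ≤ (N : ℝ) := by exact_mod_cast hN
    have h3 : Y * (Y + r / 2) ≤ 0 :=
      mul_nonpos_of_nonpos_of_nonneg h2 (by linarith)
    nlinarith [mul_nonneg (neg_nonneg.2 h2) hr0.le, mul_nonneg (mul_nonneg (neg_nonneg.2 h2) hr0.le) (by linarith : (0:ℝ) ≤ σ - 2), sq_nonneg r, mul_pos hr0 hr0, mul_nonneg (mul_nonneg hr0.le hr0.le) (by linarith : (0:ℝ) ≤ σ - 2), mul_nonpos_of_nonneg_of_nonpos (by linarith : (0:ℝ) ≤ σ + 2 * (N:ℝ) - 2) h3]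
  exact ⟨key, fun X Y hX h1 h2 => mul_neg_of_pos_of_neg hX (key Y h1 h2)⟩
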